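/- Let A, B, C, D be symmetric 2×2 complex matrices with A invertible, and let Q be the double-symmetric 4×6 matrix [[A,B,C],[B,C,D]]. Then Q has rank at most 2 if and only if C = B A⁻¹ B and D = B A⁻¹ B A⁻¹ B. -/

import Mathlib

set_option maxHeartbeats 2000000


/-- The 4×6 double-symmetric matrix built from symmetric 2×2 blocks `A B C D` in the
block form `[[A, B, C], [B, C, D]]`. -/
def doubleSymBlock (A B C D : Matrix (Fin 2) (Fin 2) ℂ) : Matrix (Fin 4) (Fin 6) ℂ :=
  !![A 0 0, A 0 1, B 0 0, B 0 1, C 0 0, C 0 1;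
     A 1 0, A 1 1, B 1 0, B 1 1, C 1 0, C 1 1;
     B 0 0, B 0 1, C 0 0, C 0 1, D 0 0, D 0 1;
     B 1 0, B 1 1, C 1 0, C 1 1, D 1 0, D 1 1]

private lemma dsb_forward (A B C D : Matrix (Fin 2) (Fin 2) ℂ) (hAinv : IsUnit A.det)
    (hrk : (doubleSymBlock A B C D).rank ≤ 2) :
    C = B * A⁻¹ * B ∧ D = B * A⁻¹ * B * A⁻¹ * B := by
  set Q : Matrix (Fin 4) (Fin 6) ℂ := doubleSymBlock A B C D with hQdef
  set E : Matrix (Fin 6) (Fin 2) ℂ := Matrix.of fun i j => if (i : ℕ) = (j : ℕ) then 1 else 0 with hE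
  set Pm : Matrix (Fin 4) (Fin 2) ℂ :=
    !![A 0 0, A 0 1; A 1 0, A 1 1; B 0 0, B 0 1; B 1 0, B 1 1] with hPm
  have hQE : Q * E = Pm := by
    ext i j
    fin_cases i <;> fin_cases j <;>
      simp [hQdef, doubleSymBlock, hE, hPm, Matrix.mul_apply, Fin.sum_univ_six,
        Matrix.vecHead, Matrix.vecTail, show ((3:Fin 6):ℕ)=3 from rfl,
        show ((4:Fin 6):ℕ)=4 from rfl, show ((5:Fin 6):ℕ)=5 from rfl, Matrix.cons_val_succ]
  have hFP : (!![(1:ℂ),0,0,0;0,1,0,0] : Matrix (Fin 2) (Fin 4) ℂ) * Pm = A := by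
    ext i j
    fin_cases i <;> fin_cases j <;>
      simp [hPm, Matrix.mul_apply, Fin.sum_univ_four]
  have hrankA : A.rank = 2 := by
    rw [Matrix.rank_of_isUnit A ((Matrix.isUnit_iff_isUnit_det A).2 hAinv)]
    simp
  have hPm2 : Pm.rank = 2 := by
    refine le_antisymm ((Matrix.rank_le_card_width _).trans (by simp)) ?_
    calc 2 = A.rank := hrankA.symm
    _ = ((!![(1:ℂ),0,0,0;0,1,0,0] : Matrix (Fin 2) (Fin 4) ℂ) * Pm).rank := by rw [hFP]
    _ ≤ Pm.rank := Matrix.rank_mul_le_right _ _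
  have hsub : LinearMap.range Pm.mulVecLin ≤ LinearMap.range Q.mulVecLin := by
    rw [← hQE, Matrix.mulVecLin_mul]
    exact LinearMap.range_comp_le_range _ _
  have hfr : Module.finrank ℂ (LinearMap.range Q.mulVecLin) ≤
      Module.finrank ℂ (LinearMap.range Pm.mulVecLin) := by
    have h1 : Q.rank ≤ Pm.rank := hrk.trans_eq hPm2.symm
    exact h1
  have heq : LinearMap.range Pm.mulVecLin = LinearMap.range Q.mulVecLin :=
    Submodule.eq_of_le_of_finrank_le hsub hfr
  have hcol : ∀ j : Fin 6, ∃ v, Pm.mulVec v = fun i => Q i j := by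
    intro j
    have hmem : (fun i => Q i j) ∈ LinearMap.range Q.mulVecLin :=
      ⟨Pi.single j 1, by simp [Matrix.mulVecLin_apply]; rfl⟩
    rw [← heq] at hmem
    exact hmem
  choose v hv using hcol
  set X : Matrix (Fin 2) (Fin 6) ℂ := Matrix.of fun k j => v j k with hX
  have hQfac : Q = Pm * X := by
    ext i j
    have h := congrFun (hv j) i
    simpa [Matrix.mul_apply, Matrix.mulVec, dotProduct, hX, Fin.sum_univ_two]
      using h.symm
  have hent := fun (i : Fin 4) (j : Fin 6) => congrFun (congrFun hQfac i) j
  set Y : Matrix (Fin 2) (Fin 2) ℂ := !![X 0 2, X 0 3; X 1 2, X 1 3] with hYd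
  set Z : Matrix (Fin 2) (Fin 2) ℂ := !![X 0 4, X 0 5; X 1 4, X 1 5] with hZd
  have hAY : A * Y = B := by
    ext i j
    fin_cases i <;> fin_cases j
    · simpa [hQdef, doubleSymBlock, hPm, hYd, Matrix.mul_apply, Fin.sum_univ_two]
        using (hent 0 2).symm
    · simpa [hQdef, doubleSymBlock, hPm, hYd, Matrix.mul_apply, Fin.sum_univ_two]
        using (hent 0 3).symm
    · simpa [hQdef, doubleSymBlock, hPm, hYd, Matrix.mul_apply, Fin.sum_univ_two]
        using (hent 1 2).symm
    · simpa [hQdef, doubleSymBlock, hPm, hYd, Matrix.mul_apply, Fin.sum_univ_two]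
        using (hent 1 3).symm
  have hBY : B * Y = C := by
    ext i j
    fin_cases i <;> fin_cases j
    · simpa [hQdef, doubleSymBlock, hPm, hYd, Matrix.mul_apply, Fin.sum_univ_two]
        using (hent 2 2).symm
    · simpa [hQdef, doubleSymBlock, hPm, hYd, Matrix.mul_apply, Fin.sum_univ_two]
        using (hent 2 3).symm
    · simpa [hQdef, doubleSymBlock, hPm, hYd, Matrix.mul_apply, Fin.sum_univ_two]
        using (hent 3 2).symm
    · simpa [hQdef, doubleSymBlock, hPm, hYd, Matrix.mul_apply, Fin.sum_univ_two]
        using (hent 3 3).symm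
  have hBZ : B * Z = D := by
    ext i j
    fin_cases i <;> fin_cases j
    · simpa [hQdef, doubleSymBlock, hPm, hZd, Matrix.mul_apply, Fin.sum_univ_two]
        using (hent 2 4).symm
    · simpa [hQdef, doubleSymBlock, hPm, hZd, Matrix.mul_apply, Fin.sum_univ_two]
        using (hent 2 5).symm
    · simpa [hQdef, doubleSymBlock, hPm, hZd, Matrix.mul_apply, Fin.sum_univ_two]
        using (hent 3 4).symm
    · simpa [hQdef, doubleSymBlock, hPm, hZd, Matrix.mul_apply, Fin.sum_univ_two]
        using (hent 3 5).symm
  have hAZ : A * Z = C := by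
    ext i j
    fin_cases i <;> fin_cases j
    · simpa [hQdef, doubleSymBlock, hPm, hZd, Matrix.mul_apply, Fin.sum_univ_two]
        using (hent 0 4).symm
    · simpa [hQdef, doubleSymBlock, hPm, hZd, Matrix.mul_apply, Fin.sum_univ_two]
        using (hent 0 5).symm
    · simpa [hQdef, doubleSymBlock, hPm, hZd, Matrix.mul_apply, Fin.sum_univ_two]
        using (hent 1 4).symm
    · simpa [hQdef, doubleSymBlock, hPm, hZd, Matrix.mul_apply, Fin.sum_univ_two]
        using (hent 1 5).symm
  have hY : Y = A⁻¹ * B := by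
    rw [← hAY, Matrix.nonsing_inv_mul_cancel_left _ _ hAinv]
  have hCeq : C = B * A⁻¹ * B := by rw [← hBY, hY, ← Matrix.mul_assoc]
  refine ⟨hCeq, ?_⟩
  have hZ : Z = A⁻¹ * C := by
    rw [← hAZ, Matrix.nonsing_inv_mul_cancel_left _ _ hAinv]
  rw [← hBZ, hZ, hCeq]
  simp only [Matrix.mul_assoc]

private lemma dsb_backward (A B C D : Matrix (Fin 2) (Fin 2) ℂ) (hAinv : IsUnit A.det)
    (hC : C = B * A⁻¹ * B) (hD : D = B * A⁻¹ * B * A⁻¹ * B) :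
    (doubleSymBlock A B C D).rank ≤ 2 := by
  set M : Matrix (Fin 2) (Fin 2) ℂ := A⁻¹ * B with hM
  set N : Matrix (Fin 2) (Fin 2) ℂ := A⁻¹ * C with hN
  have hAB : A * M = B := Matrix.mul_nonsing_inv_cancel_left A B hAinv
  have hAC : A * N = C := Matrix.mul_nonsing_inv_cancel_left A C hAinv
  have hBB : B * M = C := by rw [hM, hC, Matrix.mul_assoc]
  have hBC : B * N = D := by
    rw [hN, hC, hD]; simp only [Matrix.mul_assoc]
  have e1 : ∀ i j : Fin 2, A i 0 * M 0 j + A i 1 * M 1 j = B i j := by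
    intro i j
    simpa [Matrix.mul_apply, Fin.sum_univ_two] using congrFun (congrFun hAB i) j
  have e2 : ∀ i j : Fin 2, A i 0 * N 0 j + A i 1 * N 1 j = C i j := by
    intro i j
    simpa [Matrix.mul_apply, Fin.sum_univ_two] using congrFun (congrFun hAC i) j
  have e3 : ∀ i j : Fin 2, B i 0 * M 0 j + B i 1 * M 1 j = C i j := by
    intro i j
    simpa [Matrix.mul_apply, Fin.sum_univ_two] using congrFun (congrFun hBB i) j
  have e4 : ∀ i j : Fin 2, B i 0 * N 0 j + B i 1 * N 1 j = D i j := by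
    intro i j
    simpa [Matrix.mul_apply, Fin.sum_univ_two] using congrFun (congrFun hBC i) j
  have hfac : doubleSymBlock A B C D =
      !![A 0 0, A 0 1; A 1 0, A 1 1; B 0 0, B 0 1; B 1 0, B 1 1] *
      !![1, 0, M 0 0, M 0 1, N 0 0, N 0 1;
         0, 1, M 1 0, M 1 1, N 1 0, N 1 1] := by
    ext i j
    fin_cases i <;> fin_cases j <;>
      simp [doubleSymBlock, Matrix.mul_apply, Fin.sum_univ_two] <;>
      first
        | exact (e1 _ _).symm
        | exact (e2 _ _).symm
        | exact (e3 _ _).symm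
        | exact (e4 _ _).symm
  rw [hfac]
  exact (Matrix.rank_mul_le_left _ _).trans
    ((Matrix.rank_le_card_width _).trans (by simp))

/-- If `A, B, C, D` are symmetric 2×2 complex matrices with `A` invertible, then the
double-symmetric 4×6 matrix `[[A,B,C],[B,C,D]]` has rank at most 2 if and only if
`C = B A⁻¹ B` and `D = B A⁻¹ B A⁻¹ B`. -/
theorem stmt_6 (A B C D : Matrix (Fin 2) (Fin 2) ℂ)
    (hA : A.IsSymm) (hB : B.IsSymm) (hC : C.IsSymm) (hD : D.IsSymm)
    (hAinv : IsUnit A.det) :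
    (doubleSymBlock A B C D).rank ≤ 2 ↔
      C = B * A⁻¹ * B ∧ D = B * A⁻¹ * B * A⁻¹ * B := by
  constructor
  · exact dsb_forward A B C D hAinv
  · rintro ⟨h1, h2⟩
    exact dsb_backward A B C D hAinv h1 h2
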